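/- arXiv:1107.3350 — 2 statements merged into one kernel-verified Lean document; each statement's English description precedes it below -/
import Mathlib

section
/- The Laplacian mechanism provides ε-differential privacy in one dimension: let Q : ℝ^n → ℝ have sensitivity Δ, meaning |Q(D₁) - Q(D₂)| ≤ Δ for all neighboring D₁, D₂ (i.e., ‖D₁ - D₂‖₁ ≤ 1). Then for the mechanism K(D) = Q(D) + η with η ~ Lap(Δ/ε), and for every measurable set Sub ⊆ ℝ and all neighboring D₁, D₂: Prob(K(D₁) ∈ Sub) ≤ e^ε · Prob(K(D₂) ∈ Sub). -/
open Finset MeasureTheory Real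

open Set in

lemma lap_integrable {l : ℝ} (hl : 0 < l) :
    Integrable (fun y : ℝ => Real.exp (-|y| / l)) := by
  have h1 : IntegrableOn (fun y : ℝ => Real.exp (-|y| / l)) (Ioi 0) := by
    refine ((exp_neg_integrableOn_Ioi 0 (show 0 < 1 / l by positivity))).congr_fun
      (fun x hx => ?_) measurableSet_Ioi
    rw [abs_of_pos hx]; ring_nf
  have h2 : IntegrableOn (fun y : ℝ => Real.exp (-|y| / l)) (Iio 0) := by
    have := (MeasurePreserving.integrableOn_comp_preimage
      (Measure.measurePreserving_neg (volume : Measure ℝ))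
      (Homeomorph.neg ℝ).measurableEmbedding).2 h1
    simpa using this.congr_fun (fun x hx => by simp [abs_neg]) (by simpa using measurableSet_Iio)
  have : IntegrableOn (fun y : ℝ => Real.exp (-|y| / l)) (Iio 0 ∪ Ioi 0) := h2.union h1
  rw [← integrableOn_univ]
  refine this.congr_set_ae ?_
  rw [Set.Iio_union_Ioi]
  exact (MeasureTheory.ae_eq_univ.2 (by simp)).symm


/-- The one-dimensional Laplacian mechanism provides `ε`-differential privacy: if the query
`Q` has sensitivity `Δ` over neighboring databases (ℓ₁-distance ≤ 1), then adding
`Lap(Δ/ε)` noise to `Q(D)` satisfies, for every measurable `Sub ⊆ ℝ`,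
`Prob(K(D₁) ∈ Sub) ≤ e^ε · Prob(K(D₂) ∈ Sub)`, where the output density of `K(D)` is
`y ↦ g(y - Q(D))` with `g` the `Lap(Δ/ε)` density. -/
theorem laplace_mechanism_DP (n : ℕ) (Q : (Fin n → ℝ) → ℝ) (Δ ε : ℝ)
    (hΔ : 0 < Δ) (hε : 0 < ε)
    (hsens : ∀ D₁ D₂ : Fin n → ℝ, (∑ i, |D₁ i - D₂ i|) ≤ 1 → |Q D₁ - Q D₂| ≤ Δ)
    (D₁ D₂ : Fin n → ℝ) (hneighbor : (∑ i, |D₁ i - D₂ i|) ≤ 1)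
    (Sub : Set ℝ) (hSub : MeasurableSet Sub) :
    (∫ y in Sub, (1 / (2 * (Δ / ε))) * Real.exp (-|y - Q D₁| / (Δ / ε))) ≤
      Real.exp ε * (∫ y in Sub, (1 / (2 * (Δ / ε))) * Real.exp (-|y - Q D₂| / (Δ / ε))) := by
  have hl : 0 < Δ / ε := by positivity
  have hint : ∀ a : ℝ, Integrable (fun y : ℝ =>
      (1 / (2 * (Δ / ε))) * Real.exp (-|y - a| / (Δ / ε))) := fun a =>
    ((lap_integrable hl).comp_sub_right a).const_mul _
  rw [← MeasureTheory.integral_const_mul]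
  refine setIntegral_mono ((hint (Q D₁)).integrableOn)
    (((hint (Q D₂)).const_mul _).integrableOn) (fun y => ?_)
  have hd : |Q D₁ - Q D₂| ≤ Δ := hsens _ _ hneighbor
  have key : -|y - Q D₁| / (Δ / ε) ≤ ε + -|y - Q D₂| / (Δ / ε) := by
    have h2 : |y - Q D₂| ≤ |y - Q D₁| + Δ := by
      calc |y - Q D₂| = |(y - Q D₁) + (Q D₁ - Q D₂)| := by ring_nf
        _ ≤ |y - Q D₁| + |Q D₁ - Q D₂| := abs_add_le _ _
        _ ≤ |y - Q D₁| + Δ := by linarith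
    have : (-|y - Q D₁|) ≤ (Δ / ε) * ε + -|y - Q D₂| := by
      rw [div_mul_cancel₀ _ (ne_of_gt hε)]; linarith
    calc -|y - Q D₁| / (Δ / ε) ≤ ((Δ / ε) * ε + -|y - Q D₂|) / (Δ / ε) :=
        div_le_div_of_nonneg_right this hl.le |>.trans_eq rfl
      _ = ε + -|y - Q D₂| / (Δ / ε) := by field_simp
  calc (1 / (2 * (Δ / ε))) * Real.exp (-|y - Q D₁| / (Δ / ε))
      ≤ (1 / (2 * (Δ / ε))) * Real.exp (ε + -|y - Q D₂| / (Δ / ε)) := by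
        apply mul_le_mul_of_nonneg_left (Real.exp_le_exp.2 key) (by positivity)
    _ = Real.exp ε * ((1 / (2 * (Δ / ε))) * Real.exp (-|y - Q D₂| / (Δ / ε))) := by
        rw [Real.exp_add]; ring
end

section
/- The exponential mechanism is ε-differentially private: let u : ℝ^n × Y → ℝ be a utility function on a finite output set Y with sensitivity Δu, meaning |u(D₁, y) - u(D₂, y)| ≤ Δu for all neighboring D₁, D₂ and all y ∈ Y. Then the mechanism that outputs y ∈ Y with probability proportional to e^{-ε u(D, y)/(2Δu)} satisfies: for all neighboring D₁, D₂ and every y ∈ Y, Prob(output y on D₁) ≤ e^ε · Prob(output y on D₂). -/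
open Finset

/-- The exponential mechanism is `ε`-differentially private: for a utility function `u`
with sensitivity `Δu` on a finite output set `Y`, outputting `y` with probability
proportional to `e^{-ε u(D,y)/(2Δu)}` satisfies the `ε`-DP pointwise inequality. -/
theorem exponential_mechanism_dp (n : ℕ) {Y : Type*} [Fintype Y] [Nonempty Y]
    (u : (Fin n → ℝ) → Y → ℝ) (Δu ε : ℝ) (hΔu : 0 < Δu) (hε : 0 ≤ ε)
    (hsens : ∀ D₁ D₂ : Fin n → ℝ, (∑ i, |D₁ i - D₂ i|) ≤ 1 →
      ∀ y : Y, |u D₁ y - u D₂ y| ≤ Δu)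
    (D₁ D₂ : Fin n → ℝ) (hneighbor : (∑ i, |D₁ i - D₂ i|) ≤ 1) (y : Y) :
    Real.exp (-ε * u D₁ y / (2 * Δu)) / (∑ y' : Y, Real.exp (-ε * u D₁ y' / (2 * Δu))) ≤
      Real.exp ε *
        (Real.exp (-ε * u D₂ y / (2 * Δu)) /
          (∑ y' : Y, Real.exp (-ε * u D₂ y' / (2 * Δu)))) := by
  have h2Δ : (0:ℝ) < 2 * Δu := by linarith
  -- pointwise exponent bound
  have key : ∀ (A B : Fin n → ℝ) (z : Y), (∑ i, |A i - B i|) ≤ 1 →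
      Real.exp (-ε * u A z / (2 * Δu)) ≤ Real.exp (ε/2) * Real.exp (-ε * u B z / (2 * Δu)) := by
    intro A B z h
    rw [← Real.exp_add]
    apply Real.exp_le_exp.mpr
    have hs := hsens A B h z
    have : u B z - u A z ≤ Δu := by
      have := abs_le.mp hs; linarith [this.1]
    have h1 : ε * (u B z - u A z) ≤ ε * Δu := mul_le_mul_of_nonneg_left this hε
    have hdiff : ε/2 + -ε * u B z / (2 * Δu) - (-ε * u A z / (2 * Δu))
        = (ε*Δu - ε*(u B z - u A z))/(2*Δu) := by field_simp; ring
    have hnum : 0 ≤ ε*Δu - ε*(u B z - u A z) := by linarith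
    have := div_nonneg hnum h2Δ.le
    linarith
  have N1 := key D₁ D₂ y hneighbor
  have hneighbor' : (∑ i, |D₂ i - D₁ i|) ≤ 1 := by
    simpa [abs_sub_comm] using hneighbor
  have S1 : (∑ y' : Y, Real.exp (-ε * u D₂ y' / (2 * Δu))) ≤
      Real.exp (ε/2) * (∑ y' : Y, Real.exp (-ε * u D₁ y' / (2 * Δu))) := by
    rw [Finset.mul_sum]
    exact Finset.sum_le_sum fun y' _ => key D₂ D₁ y' hneighbor'
  set S₁ := (∑ y' : Y, Real.exp (-ε * u D₁ y' / (2 * Δu))) with hS₁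
  set S₂ := (∑ y' : Y, Real.exp (-ε * u D₂ y' / (2 * Δu))) with hS₂
  have hS₁pos : 0 < S₁ := Finset.sum_pos (fun _ _ => Real.exp_pos _) Finset.univ_nonempty
  have hS₂pos : 0 < S₂ := Finset.sum_pos (fun _ _ => Real.exp_pos _) Finset.univ_nonempty
  have hinv : 1 / S₁ ≤ Real.exp (ε/2) / S₂ := by
    rw [div_le_div_iff₀ hS₁pos hS₂pos]
    linarith
  calc Real.exp (-ε * u D₁ y / (2 * Δu)) / S₁
      ≤ (Real.exp (ε/2) * Real.exp (-ε * u D₂ y / (2 * Δu))) * (Real.exp (ε/2) / S₂) := by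
        rw [div_eq_mul_one_div]
        apply mul_le_mul N1 hinv (by positivity) (by positivity)
    _ = (Real.exp (ε/2) * Real.exp (ε/2)) * (Real.exp (-ε * u D₂ y / (2 * Δu)) / S₂) := by
        ring
    _ = Real.exp ε * (Real.exp (-ε * u D₂ y / (2 * Δu)) / S₂) := by
        rw [← Real.exp_add]; norm_num
end
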